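/- Let E = (Fin 3 → ℝ) × (Fin 3 → ℝ) with points written (u, v) and tangent vectors written (a, b). Define the field of symmetric bilinear forms g₁ : E → (E → E → ℝ) by g₁(u,v)((a,b),(a',b')) = Σ_{i=1}^{3} (a_i b'_i + a'_i b_i) + 2 v₂ a₁ a'₁ + 2 v₃ a₂ a'₂ (the metric 2du₁(dv₁ + v₂du₁) + 2du₂(dv₂ + v₃du₂) + 2du₃dv₃). For λ = (1, 1, 0) and τ ∈ ℝ let B_τ : E → E be the linear boost B_τ(u, v) = ((e^{−λ_i τ} u_i)_i, (e^{λ_i τ} v_i)_i), and define the pullback (Φ_τ g₁)(p)(w, w') = g₁(B_τ p)(B_τ w, B_τ w'). Then for all p, w, w' ∈ E, (Φ_τ g₁)(p)(w, w') converges as τ → +∞ to η(p)(w, w'), where η is the constant (flat) bilinear form η((a,b),(a',b')) = Σ_{i=1}^{3} (a_i b'_i + a'_i b_i) (the flat metric 2du₁dv₁ + 2du₂dv₂ + 2du₃dv₃). -/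

import Mathlib

open Real Filter Topology

/-- The metric `g₁ = 2du₁(dv₁ + v₂du₁) + 2du₂(dv₂ + v₃du₂) + 2du₃dv₃` as a field of
bilinear forms on `E = (Fin 3 → ℝ) × (Fin 3 → ℝ)`; points are `(u, v)` and tangent
vectors `(a, b)`. -/
noncomputable def gOne : ((Fin 3 → ℝ) × (Fin 3 → ℝ)) → ((Fin 3 → ℝ) × (Fin 3 → ℝ)) →
    ((Fin 3 → ℝ) × (Fin 3 → ℝ)) → ℝ :=
  fun p w w' =>
    (∑ i : Fin 3, (w.1 i * w'.2 i + w'.1 i * w.2 i))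
      + 2 * p.2 1 * w.1 0 * w'.1 0
      + 2 * p.2 2 * w.1 1 * w'.1 1

/-- The flat metric `η = 2du₁dv₁ + 2du₂dv₂ + 2du₃dv₃` as a constant bilinear form. -/
noncomputable def flatEta : ((Fin 3 → ℝ) × (Fin 3 → ℝ)) →
    ((Fin 3 → ℝ) × (Fin 3 → ℝ)) → ℝ :=
  fun w w' => ∑ i : Fin 3, (w.1 i * w'.2 i + w'.1 i * w.2 i)

/-- The linear boost `B_τ(u, v) = ((e^{−λ_i τ} u_i)_i, (e^{λ_i τ} v_i)_i)` with
boost vector `λ = (1, 1, 0)`. -/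
noncomputable def boost110 (τ : ℝ) :
    ((Fin 3 → ℝ) × (Fin 3 → ℝ)) → ((Fin 3 → ℝ) × (Fin 3 → ℝ)) :=
  fun p =>
    (fun i => Real.exp (-(![(1 : ℝ), 1, 0] i) * τ) * p.1 i,
     fun i => Real.exp ((![(1 : ℝ), 1, 0] i) * τ) * p.2 i)

/-- The boost limit with boost vector `(1,1,0)`: the pullback of the metric
`2du₁(dv₁ + v₂du₁) + 2du₂(dv₂ + v₃du₂) + 2du₃dv₃` converges pointwise, as `τ → +∞`,
to the flat metric `2du₁dv₁ + 2du₂dv₂ + 2du₃dv₃`. -/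
theorem boost_limit_VSI_step2 :
    ∀ p w w' : (Fin 3 → ℝ) × (Fin 3 → ℝ),
      Tendsto
        (fun τ : ℝ => gOne (boost110 τ p) (boost110 τ w) (boost110 τ w'))
        atTop (𝓝 (flatEta w w')) := by
  intro p w w'
  have key : (fun τ : ℝ => gOne (boost110 τ p) (boost110 τ w) (boost110 τ w'))
      = fun τ : ℝ => flatEta w w'
        + (2 * p.2 1 * w.1 0 * w'.1 0) * Real.exp (-τ)
        + (2 * p.2 2 * w.1 1 * w'.1 1) * (Real.exp (-τ) * Real.exp (-τ)) := by
    funext τ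
    simp [gOne, boost110, flatEta, Fin.sum_univ_three, Real.exp_neg]
    have h : Real.exp τ ≠ 0 := Real.exp_ne_zero τ
    field_simp
  rw [key]
  have h1 : Tendsto (fun τ : ℝ => Real.exp (-τ)) atTop (𝓝 0) :=
    Real.tendsto_exp_neg_atTop_nhds_zero
  have := (Tendsto.add (tendsto_const_nhds (x := flatEta w w'))
      (h1.const_mul (2 * p.2 1 * w.1 0 * w'.1 0))).add
    ((h1.mul h1).const_mul (2 * p.2 2 * w.1 1 * w'.1 1))
  simpa using this
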